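/- Let M = [[A, B], [C, D]] be a real block matrix with A invertible and M₀ := D − C·A⁻¹·B invertible, and define S⁻¹ := [[A⁻¹, 0], [0, 0]], P := col(−A⁻¹B; I), R := Pᵀ. Then the error propagation operator of the two-level method without post-smoothing vanishes: (I − P·M₀⁻¹·R·M)·(I − S⁻¹·M) = 0, i.e., the two-level preconditioned Richardson iteration is a direct solver. -/

import Mathlib

open Matrix

/-- **The two-level method without post-smoothing is a direct solver:**
its error propagation operator `(I - P·M₀⁻¹·R·M)·(I - S⁻¹·M)` vanishes, where
`S⁻¹ = [[A⁻¹,0],[0,0]]`, `P = col(-A⁻¹B; I)`, `R = Pᵀ`, `M₀ = D - C·A⁻¹·B`. -/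
theorem two_level_error_propagation_vanishes {n₁ n₂ : ℕ}
    (A : Matrix (Fin n₁) (Fin n₁) ℝ) (B : Matrix (Fin n₁) (Fin n₂) ℝ)
    (C : Matrix (Fin n₂) (Fin n₁) ℝ) (D : Matrix (Fin n₂) (Fin n₂) ℝ)
    (hA : IsUnit A) (hM₀ : IsUnit (D - C * A⁻¹ * B)) :
    ((1 : Matrix (Fin n₁ ⊕ Fin n₂) (Fin n₁ ⊕ Fin n₂) ℝ) -
        Matrix.fromRows (-(A⁻¹ * B)) (1 : Matrix (Fin n₂) (Fin n₂) ℝ) *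
          (D - C * A⁻¹ * B)⁻¹ *
          (Matrix.fromRows (-(A⁻¹ * B)) (1 : Matrix (Fin n₂) (Fin n₂) ℝ))ᵀ *
          Matrix.fromBlocks A B C D) *
      ((1 : Matrix (Fin n₁ ⊕ Fin n₂) (Fin n₁ ⊕ Fin n₂) ℝ) -
        Matrix.fromBlocks A⁻¹ 0 0 0 * Matrix.fromBlocks A B C D) = 0 := by
  have hAd : IsUnit A.det := (Matrix.isUnit_iff_isUnit_det A).mp hA
  have hMd : IsUnit (D - C * A⁻¹ * B).det := (Matrix.isUnit_iff_isUnit_det _).mp hM₀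
  set X : Matrix (Fin n₁) (Fin n₂) ℝ := -(A⁻¹ * B) with hX
  have hE1 : (1 : Matrix (Fin n₁ ⊕ Fin n₂) (Fin n₁ ⊕ Fin n₂) ℝ) -
      Matrix.fromBlocks A⁻¹ 0 0 0 * Matrix.fromBlocks A B C D
      = Matrix.fromBlocks 0 X 0 1 := by
    rw [Matrix.fromBlocks_multiply, ← Matrix.fromBlocks_one]
    ext i j
    cases i <;> cases j <;>
      simp [Matrix.fromBlocks, Matrix.nonsing_inv_mul A hAd, hX]
  rw [hE1, Matrix.sub_mul, Matrix.one_mul]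
  have h2 : Matrix.fromBlocks A B C D * Matrix.fromBlocks 0 X 0 1
      = Matrix.fromBlocks 0 0 0 (D - C * A⁻¹ * B) := by
    have hax : A * X + B * (1 : Matrix (Fin n₂) (Fin n₂) ℝ) = 0 := by
      simp [hX, Matrix.mul_neg, ← Matrix.mul_assoc, Matrix.mul_nonsing_inv A hAd]
    have hcx : C * X + D * (1 : Matrix (Fin n₂) (Fin n₂) ℝ) = D - C * A⁻¹ * B := by
      simp [hX, Matrix.mul_neg, ← Matrix.mul_assoc, sub_eq_add_neg, add_comm]
    rw [Matrix.fromBlocks_multiply, hax, hcx]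
    simp
  have h3 : (Matrix.fromRows X (1 : Matrix (Fin n₂) (Fin n₂) ℝ))ᵀ *
      Matrix.fromBlocks (0 : Matrix (Fin n₁) (Fin n₁) ℝ) (0 : Matrix (Fin n₁) (Fin n₂) ℝ)
        (0 : Matrix (Fin n₂) (Fin n₁) ℝ) (D - C * A⁻¹ * B)
      = Matrix.fromCols (0 : Matrix (Fin n₂) (Fin n₁) ℝ) (D - C * A⁻¹ * B) := by
    rw [Matrix.transpose_fromRows, Matrix.fromCols_mul_fromBlocks]
    simp
  rw [Matrix.mul_assoc _ _ (Matrix.fromBlocks 0 X 0 1), h2,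
      Matrix.mul_assoc _ _ (Matrix.fromBlocks (0 : Matrix (Fin n₁) (Fin n₁) ℝ) 0 0
        (D - C * A⁻¹ * B)), h3,
      Matrix.mul_assoc _ (D - C * A⁻¹ * B)⁻¹, Matrix.mul_fromCols,
      Matrix.mul_zero, Matrix.nonsing_inv_mul _ hMd,
      Matrix.fromRows_mul_fromCols]
  simp
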